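/- There is a polynomial p such that every purely implicational formula ρ valid in minimal logic has a tree-like LM→ proof of the sequent ⇒ ρ whose height plus the total weight of the set of distinct formulas occurring in it is at most p(|ρ|) (i.e., ⇒ ρ has a quasi-polynomial tree-like LM→ proof). -/

import Mathlib

/-- Purely implicational formulas: built from propositional variables by `→`. -/
inductive Fml : Type
  | var : ℕ → Fml
  | imp : Fml → Fml → Fml
deriving DecidableEq

namespace Fml

/-- The weight of a formula: its total number of symbols. -/
def weight : Fml → ℕ
  | var _ => 1
  | imp a b => weight a + weight b + 1

/-- The (reflexive) subformula relation. -/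
inductive Sub : Fml → Fml → Prop
  | refl (φ : Fml) : Sub φ φ
  | impL {φ a b : Fml} : Sub φ a → Sub φ (imp a b)
  | impR {φ a b : Fml} : Sub φ b → Sub φ (imp a b)

/-- The antecedent of an implication (junk value on variables). -/
def antecedent : Fml → Fml
  | var n => var n
  | imp a _ => a

end Fml

/-- Tree-like natural deductions (with possible repetition nodes, i.e. NM→⁺-trees). -/
inductive DT : Type
  | leaf (φ : Fml)
  | impI (α β : Fml) (t : DT)
  | impE (α β : Fml) (t₁ t₂ : DT)
  | rep (φ : Fml) (ts : List DT)

namespace DT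

/-- The formula labelling the root of a deduction tree. -/
def label : DT → Fml
  | leaf φ => φ
  | impI α β _ => .imp α β
  | impE _ β _ _ => β
  | rep φ _ => φ

/-- Local correctness of a deduction tree w.r.t. the rules (→I), (→E), (R)ₙ (n ≥ 1). -/
inductive Correct : DT → Prop
  | leaf (φ : Fml) : Correct (leaf φ)
  | impI {α β : Fml} {t : DT} : t.label = β → Correct t → Correct (impI α β t)
  | impE {α β : Fml} {t₁ t₂ : DT} : t₁.label = α → t₂.label = .imp α β →
      Correct t₁ → Correct t₂ → Correct (impE α β t₁ t₂)
  | rep {φ : Fml} {ts : List DT} : ts ≠ [] → (∀ t ∈ ts, label t = φ) →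
      (∀ t ∈ ts, Correct t) → Correct (rep φ ts)

/-- A deduction lies in NM→ iff it uses no repetition rule. -/
inductive RepFree : DT → Prop
  | leaf (φ : Fml) : RepFree (leaf φ)
  | impI {α β : Fml} {t : DT} : RepFree t → RepFree (impI α β t)
  | impE {α β : Fml} {t₁ t₂ : DT} : RepFree t₁ → RepFree t₂ → RepFree (impE α β t₁ t₂)

/-- `ClosedUnder D t` : every deductive path of `t` from a leaf labelled `α` to the
root of `t` either contains the conclusion of an (→I)-inference discharging `α`, or
`α ∈ D` (the formulas discharged strictly below `t`).  With `D = ∅` this says that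
every deductive path of `t` is closed. -/
inductive ClosedUnder : Set Fml → DT → Prop
  | leaf {D : Set Fml} {φ : Fml} : φ ∈ D → ClosedUnder D (leaf φ)
  | impI {D : Set Fml} {α β : Fml} {t : DT} :
      ClosedUnder (insert α D) t → ClosedUnder D (impI α β t)
  | impE {D : Set Fml} {α β : Fml} {t₁ t₂ : DT} :
      ClosedUnder D t₁ → ClosedUnder D t₂ → ClosedUnder D (impE α β t₁ t₂)
  | rep {D : Set Fml} {φ : Fml} {ts : List DT} :
      (∀ t ∈ ts, ClosedUnder D t) → ClosedUnder D (rep φ ts)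

/-- The height of a deduction tree. -/
def height : DT → ℕ
  | leaf _ => 0
  | impI _ _ t => height t + 1
  | impE _ _ t₁ t₂ => max (height t₁) (height t₂) + 1
  | rep _ ts => (ts.attach.map fun t => height t.1).foldr max 0 + 1
decreasing_by
  all_goals simp_wf
  all_goals try have := List.sizeOf_lt_of_mem t.2
  all_goals omega

/-- The set of distinct formulas occurring in a deduction tree. -/
def formulas : DT → Finset Fml
  | leaf φ => {φ}
  | impI α β t => insert (.imp α β) (formulas t)
  | impE _ β t₁ t₂ => insert β (formulas t₁ ∪ formulas t₂)
  | rep φ ts => insert φ ((ts.attach.map fun t => formulas t.1).foldr (· ∪ ·) ∅)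
decreasing_by
  all_goals simp_wf
  all_goals try have := List.sizeOf_lt_of_mem t.2
  all_goals omega

/-- `φ(∂)`: the total weight of the set of distinct formulas occurring in `∂`. -/
def phi (t : DT) : ℕ := (t.formulas).sum Fml.weight

/-- The depths (= heights in the tree) of the leaves of a deduction tree. -/
def leafDepths : DT → List ℕ
  | leaf _ => [0]
  | impI _ _ t => (leafDepths t).map (· + 1)
  | impE _ _ t₁ t₂ => (leafDepths t₁ ++ leafDepths t₂).map (· + 1)
  | rep _ ts => ((ts.attach.map fun t => leafDepths t.1).flatten).map (· + 1)
decreasing_by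
  all_goals simp_wf
  all_goals try have := List.sizeOf_lt_of_mem t.2
  all_goals omega

/-- All leaves (top nodes) of the deduction have the same height. -/
def UniformLeaves (t : DT) : Prop := ∀ d ∈ t.leafDepths, d = t.height

/-- `t` is a tree-like NM→ proof of `ρ` : a locally correct, repetition-free tree
with conclusion `ρ`, all of whose deductive paths are closed. -/
def IsProofNM (t : DT) (ρ : Fml) : Prop :=
  t.RepFree ∧ t.Correct ∧ t.ClosedUnder ∅ ∧ t.label = ρ

/-- `t` is a tree-like NM→⁺ proof of `ρ`. -/
def IsProofNMPlus (t : DT) (ρ : Fml) : Prop :=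
  t.Correct ∧ t.ClosedUnder ∅ ∧ t.label = ρ

end DT

/-- `ρ` is valid in minimal logic iff it has a tree-like NM→ proof. -/
def MinValid (ρ : Fml) : Prop := ∃ t : DT, t.IsProofNM ρ

namespace Fml

/-- The set of propositional variables occurring in a formula. -/
def vars : Fml → Finset ℕ
  | var n => {n}
  | imp a b => a.vars ∪ b.vars

end Fml

/-- Tree-like deductions in Hudelmaier's cutfree sequent calculus LM→ for minimal
logic (sequents `Γ ⇒ α` with `Γ` a multiset of purely implicational formulas). -/
inductive LMT : Type
  | ax (Γ : Multiset Fml) (p : ℕ)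
  | i1 (Γ : Multiset Fml) (α β : Fml) (t : LMT)
  | i2 (Γ : Multiset Fml) (α β γ : Fml) (t : LMT)
  | eP (Γ : Multiset Fml) (p : ℕ) (γ : Fml) (q : ℕ) (t : LMT)
  | eE (Γ : Multiset Fml) (α β γ : Fml) (q : ℕ) (t₁ t₂ : LMT)

namespace LMT

/-- The antecedent of the end-sequent. -/
def ante : LMT → Multiset Fml
  | ax Γ p => (Fml.var p) ::ₘ Γ
  | i1 Γ _ _ _ => Γ
  | i2 Γ α β γ _ => (Fml.imp (.imp α β) γ) ::ₘ Γ
  | eP Γ p γ _ _ => (Fml.var p) ::ₘ (Fml.imp (.var p) γ) ::ₘ Γ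
  | eE Γ α β γ _ _ _ => (Fml.imp (.imp α β) γ) ::ₘ Γ

/-- The succedent of the end-sequent. -/
def succ : LMT → Fml
  | ax _ p => .var p
  | i1 _ α β _ => .imp α β
  | i2 _ α β _ _ => .imp α β
  | eP _ _ _ q _ => .var q
  | eE _ _ _ _ q _ _ => .var q

/-- `q ∈ VAR(Γ, γ)`. -/
def inVars (q : ℕ) (Γ : Multiset Fml) (γ : Fml) : Prop :=
  q ∈ γ.vars ∨ ∃ δ ∈ Γ, q ∈ δ.vars

/-- Local correctness of an LM→ deduction tree (rules (MA), (MI1→), (MI2→),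
(ME→P), (ME→→), with their side constraints). -/
inductive Correct : LMT → Prop
  | ax (Γ : Multiset Fml) (p : ℕ) : Correct (ax Γ p)
  | i1 {Γ : Multiset Fml} {α β : Fml} {t : LMT} :
      Correct t → t.ante = α ::ₘ Γ → t.succ = β →
      (∀ γ : Fml, Fml.imp (.imp α β) γ ∉ Γ) → Correct (i1 Γ α β t)
  | i2 {Γ : Multiset Fml} {α β γ : Fml} {t : LMT} :
      Correct t → t.ante = α ::ₘ (Fml.imp β γ) ::ₘ Γ → t.succ = β →
      Correct (i2 Γ α β γ t)
  | eP {Γ : Multiset Fml} {p : ℕ} {γ : Fml} {q : ℕ} {t : LMT} :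
      Correct t → t.ante = (Fml.var p) ::ₘ γ ::ₘ Γ → t.succ = .var q →
      inVars q Γ γ → p ≠ q → Correct (eP Γ p γ q t)
  | eE {Γ : Multiset Fml} {α β γ : Fml} {q : ℕ} {t₁ t₂ : LMT} :
      Correct t₁ → Correct t₂ →
      t₁.ante = α ::ₘ (Fml.imp β γ) ::ₘ Γ → t₁.succ = β →
      t₂.ante = γ ::ₘ Γ → t₂.succ = .var q →
      inVars q Γ γ → Correct (eE Γ α β γ q t₁ t₂)

/-- The height of an LM→ deduction tree. -/
def height : LMT → ℕ
  | ax _ _ => 0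
  | i1 _ _ _ t => t.height + 1
  | i2 _ _ _ _ t => t.height + 1
  | eP _ _ _ _ t => t.height + 1
  | eE _ _ _ _ _ t₁ t₂ => max t₁.height t₂.height + 1

/-- The set of distinct formulas occurring (in the sequents) of an LM→ deduction. -/
def formulas : LMT → Finset Fml
  | t@(ax _ _) => insert t.succ t.ante.toFinset
  | t@(i1 _ _ _ s) => insert t.succ t.ante.toFinset ∪ formulas s
  | t@(i2 _ _ _ _ s) => insert t.succ t.ante.toFinset ∪ formulas s
  | t@(eP _ _ _ _ s) => insert t.succ t.ante.toFinset ∪ formulas s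
  | t@(eE _ _ _ _ _ s₁ s₂) => insert t.succ t.ante.toFinset ∪ formulas s₁ ∪ formulas s₂

/-- The total weight of the set of distinct formulas occurring in an LM→ deduction. -/
def phi (t : LMT) : ℕ := (t.formulas).sum Fml.weight

end LMT

/-! ### Auxiliary development -/

namespace Fml

lemma weight_pos (φ : Fml) : 1 ≤ φ.weight := by
  cases φ <;> simp [weight] <;> omega

/-- Subformulas as a finset. -/
def subF : Fml → Finset Fml
  | var n => {var n}
  | imp a b => insert (imp a b) (subF a ∪ subF b)

lemma self_mem_subF (φ : Fml) : φ ∈ subF φ := by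
  cases φ <;> simp [subF]

lemma mem_subF_of_sub {φ ψ : Fml} (h : Sub φ ψ) : φ ∈ subF ψ := by
  induction h with
  | refl => exact self_mem_subF _
  | impL h ih => simp [subF]; right; left; exact ih
  | impR h ih => simp [subF]; right; right; exact ih

lemma weight_le_of_mem_subF {φ ψ : Fml} (h : φ ∈ subF ψ) : φ.weight ≤ ψ.weight := by
  induction ψ with
  | var n => simp [subF] at h; subst h; rfl
  | imp a b iha ihb =>
    simp [subF] at h
    rcases h with h | h | h
    · subst h; rfl
    · exact le_trans (iha h) (by simp [weight]; omega)
    · exact le_trans (ihb h) (by simp [weight]; omega)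

lemma card_subF_le (φ : Fml) : (subF φ).card ≤ φ.weight := by
  induction φ with
  | var n => simp [subF, weight]
  | imp a b iha ihb =>
    calc (subF (imp a b)).card ≤ (subF a ∪ subF b).card + 1 := by
          simpa [subF] using Finset.card_insert_le _ _
    _ ≤ ((subF a).card + (subF b).card) + 1 := by
          have := Finset.card_union_le (subF a) (subF b); omega
    _ ≤ (imp a b).weight := by simp [weight]; omega

lemma sub_trans {a b c : Fml} (h1 : Sub a b) (h2 : Sub b c) : Sub a c := by
  induction h2 with
  | refl => exact h1
  | impL h ih => exact Sub.impL ih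
  | impR h ih => exact Sub.impR ih

end Fml

/-! ### Kripke semantics for minimal implicational logic -/

structure KM where
  W : Type
  le : W → W → Prop
  refl : ∀ w, le w w
  trans : ∀ {a b c}, le a b → le b c → le a c
  val : W → ℕ → Prop
  mono : ∀ {a b n}, le a b → val a n → val b n

namespace KM

def forces (M : KM) : Fml → M.W → Prop
  | .var n, w => M.val w n
  | .imp a b, w => ∀ w', M.le w w' → M.forces a w' → M.forces b w'

lemma forces_var {M : KM} {n : ℕ} {w : M.W} : M.forces (.var n) w ↔ M.val w n := Iff.rfl

lemma forces_imp {M : KM} {a b : Fml} {w : M.W} :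
    M.forces (.imp a b) w ↔ ∀ w', M.le w w' → M.forces a w' → M.forces b w' := Iff.rfl

lemma forces_mono {M : KM} {φ : Fml} {w w' : M.W} (h : M.le w w') (hf : M.forces φ w) :
    M.forces φ w' := by
  induction φ generalizing w w' with
  | var n => exact M.mono h hf
  | imp a b iha ihb =>
    intro u hu ha
    exact hf u (M.trans h hu) ha

lemma forces_imp_of_forces {M : KM} {b : Fml} (a : Fml) {w : M.W} (h : M.forces b w) :
    M.forces (.imp a b) w := fun w' hw' _ => forces_mono hw' h

lemma forces_mp {M : KM} {a b : Fml} {w : M.W} (h : M.forces (.imp a b) w)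
    (ha : M.forces a w) : M.forces b w := h w (M.refl w) ha

/-- If `w ⊩ a` and `w ⊩ b→c` then `w ⊩ (a→b)→c`. -/
lemma forces_ll {M : KM} {a b c : Fml} {w : M.W} (ha : M.forces a w)
    (hbc : M.forces (.imp b c) w) : M.forces (.imp (.imp a b) c) w := by
  intro w' hw' hab
  exact forces_mp (forces_mono hw' hbc) (hab w' (M.refl w') (forces_mono hw' ha))

end KM

/-! ### Soundness of NM→ -/

theorem nm_sound {D : Set Fml} {t : DT} (h : t.ClosedUnder D) (hc : t.Correct)
    (M : KM) (w : M.W) (hD : ∀ α ∈ D, M.forces α w) : M.forces t.label w := by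
  induction h generalizing w with
  | leaf hm => exact hD _ hm
  | @impI D α β t ht ih =>
    cases hc with
    | impI hl hct =>
      intro w' hw' ha
      have := ih hct w' (by
        intro δ hδ
        rcases hδ with h | h
        · subst h; exact ha
        · exact KM.forces_mono hw' (hD _ h))
      rwa [hl] at this
  | @impE D α β t₁ t₂ h1 h2 ih1 ih2 =>
    cases hc with
    | impE hl1 hl2 hc1 hc2 =>
      have f1 := ih1 hc1 w hD
      have f2 := ih2 hc2 w hD
      rw [hl1] at f1; rw [hl2] at f2
      exact KM.forces_mp f2 f1
  | @rep D φ ts hts ih =>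
    cases hc with
    | rep hne hl hcs =>
      obtain ⟨t₀, ht₀⟩ := List.exists_mem_of_ne_nil _ hne
      have := ih t₀ ht₀ (hcs t₀ ht₀) w hD
      rwa [hl t₀ ht₀] at this

theorem minValid_valid {ρ : Fml} (h : MinValid ρ) (M : KM) (w : M.W) : M.forces ρ w := by
  obtain ⟨t, _, hc, hcl, hl⟩ := h
  have := nm_sound hcl hc M w (by simp)
  rwa [hl] at this
/-! ### The proof-search measure -/

open Classical in
/-- succedent measure: 1 if a matching `δ→γ` is in `Γ` (or `δ` is a variable), else `|δ|`. -/
noncomputable def dMeas (Γ : Multiset Fml) (δ : Fml) : ℕ :=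
  if ∃ γ, Fml.imp δ γ ∈ Γ then 1 else δ.weight

/-- sum of the weights of `Γ`. -/
def sumW (Γ : Multiset Fml) : ℕ := (Γ.map Fml.weight).sum

noncomputable def mu (Γ : Multiset Fml) (δ : Fml) : ℕ := sumW Γ + dMeas Γ δ

lemma sumW_cons (a : Fml) (Γ : Multiset Fml) : sumW (a ::ₘ Γ) = a.weight + sumW Γ := by
  simp [sumW]

lemma one_le_dMeas (Γ : Multiset Fml) (δ : Fml) : 1 ≤ dMeas Γ δ := by
  unfold dMeas; split
  · exact le_refl 1
  · exact δ.weight_pos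

lemma dMeas_le_weight (Γ : Multiset Fml) (δ : Fml) : dMeas Γ δ ≤ δ.weight := by
  unfold dMeas; split
  · exact δ.weight_pos
  · exact le_refl _

lemma dMeas_var (Γ : Multiset Fml) (q : ℕ) : dMeas Γ (.var q) = 1 := by
  unfold dMeas; split <;> simp [Fml.weight]

lemma dMeas_of_match {Γ : Multiset Fml} {δ γ : Fml} (h : Fml.imp δ γ ∈ Γ) :
    dMeas Γ δ = 1 := by
  unfold dMeas; rw [if_pos ⟨γ, h⟩]

lemma dMeas_of_not_match {Γ : Multiset Fml} {δ : Fml} (h : ∀ γ, Fml.imp δ γ ∉ Γ) :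
    dMeas Γ δ = δ.weight := by
  unfold dMeas; rw [if_neg (by push_neg; exact h)]

/-- the succedent measure of the premise created by (MI2→)/(ME→→) is 1. -/
lemma dMeas_premise1 (α β γ : Fml) (Γ : Multiset Fml) :
    dMeas (α ::ₘ (Fml.imp β γ) ::ₘ Γ) β = 1 := by
  cases β with
  | var n => exact dMeas_var _ _
  | imp a b => exact dMeas_of_match (γ := γ) (by simp)

/-- provability with the height bound. -/
noncomputable def Prov (Γ : Multiset Fml) (δ : Fml) : Prop :=
  ∃ t : LMT, t.Correct ∧ t.ante = Γ ∧ t.succ = δ ∧ t.height ≤ mu Γ δ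

def Invalid (Γ : Multiset Fml) (δ : Fml) : Prop :=
  ∃ (M : KM) (w : M.W), (∀ φ ∈ Γ, M.forces φ w) ∧ ¬ M.forces δ w

/-! ### One-world countermodels -/

def oneW (q : ℕ) : KM where
  W := Unit
  le _ _ := True
  refl _ := trivial
  trans _ _ := trivial
  val _ n := n ≠ q
  mono _ h := h

lemma oneW_forces {q : ℕ} {φ : Fml} (h : q ∉ φ.vars) : (oneW q).forces φ () := by
  induction φ with
  | var n =>
    simp [Fml.vars] at h
    exact fun hn => h hn.symm
  | imp a b iha ihb =>
    intro w' _ _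
    cases w'
    exact ihb (by simp [Fml.vars] at h; exact h.2)

lemma oneW_not_forces_q (q : ℕ) : ¬ (oneW q).forces (.var q) () := by
  simp [KM.forces, oneW]
/-! ### Combining countermodels below a fresh root -/

section Combine

variable {ι : Type} (M : ι → KM) (pt : ∀ i, (M i).W)

/-- order on the disjoint union with a fresh root `none`. -/
inductive CLe : Option (Σ i, (M i).W) → Option (Σ i, (M i).W) → Prop
  | root : CLe none none
  | up (i : ι) (u : (M i).W) : (M i).le (pt i) u → CLe none (some ⟨i, u⟩)
  | inner (i : ι) (u v : (M i).W) : (M i).le u v → CLe (some ⟨i, u⟩) (some ⟨i, v⟩)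

def combKM (rv : ℕ → Prop) (hrv : ∀ i n, rv n → (M i).val (pt i) n) : KM where
  W := Option (Σ i, (M i).W)
  le := CLe M pt
  refl w := by
    cases w with
    | none => exact CLe.root
    | some s => exact CLe.inner s.1 s.2 s.2 ((M s.1).refl s.2)
  trans := by
    intro a b c hab hbc
    cases hab with
    | root => exact hbc
    | up i u h =>
      cases hbc with
      | inner i u v h' => exact CLe.up i v ((M i).trans h h')
    | inner i u v h =>
      cases hbc with
      | inner i v v' h' => exact CLe.inner i u v' ((M i).trans h h')
  val w n := match w with
    | none => rv n
    | some s => (M s.1).val s.2 n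
  mono := by
    intro a b n hab hv
    cases hab with
    | root => exact hv
    | up i u h => exact (M i).mono h (hrv i n hv)
    | inner i u v h => exact (M i).mono h hv

variable {M : ι → KM} {pt : ∀ i, (M i).W} {rv : ℕ → Prop} {hrv : ∀ i n, rv n → (M i).val (pt i) n}

lemma combKM_forces_some (φ : Fml) (i : ι) (u : (M i).W) :
    (combKM M pt rv hrv).forces φ (some ⟨i, u⟩) ↔ (M i).forces φ u := by
  induction φ generalizing u with
  | var n => exact Iff.rfl
  | imp a b iha ihb =>
    constructor
    · intro h v hv ha
      have := h (some ⟨i, v⟩) (CLe.inner i u v hv) ((iha v).mpr ha)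
      exact (ihb v).mp this
    · intro h w' hw' ha
      cases hw' with
      | inner i u v hv => exact (ihb v).mpr (h v hv ((iha v).mp ha))

end Combine

/-- The key countermodel combination. -/
lemma combine (Γ : Multiset Fml) (q : ℕ)
    (hq : Fml.var q ∉ Γ)
    (hP : ∀ p γ, Fml.imp (.var p) γ ∈ Γ → Fml.var p ∉ Γ)
    (H : ∀ a b c, Fml.imp (.imp a b) c ∈ Γ →
        ∃ (M : KM) (w : M.W), (∀ φ ∈ Γ.erase (Fml.imp (.imp a b) c), M.forces φ w) ∧
          M.forces a w ∧ M.forces (.imp b c) w ∧ ¬ M.forces b w) :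
    Invalid Γ (.var q) := by
  classical
  set ι := {x : Fml × Fml × Fml // Fml.imp (.imp x.1 x.2.1) x.2.2 ∈ Γ} with hι
  have hH : ∀ i : ι, ∃ (M : KM) (w : M.W),
      (∀ φ ∈ Γ.erase (Fml.imp (.imp i.1.1 i.1.2.1) i.1.2.2), M.forces φ w) ∧
        M.forces i.1.1 w ∧ M.forces (.imp i.1.2.1 i.1.2.2) w ∧ ¬ M.forces i.1.2.1 w :=
    fun i => H i.1.1 i.1.2.1 i.1.2.2 i.2
  choose Mod pt hErase hA hBC hB using hH
  -- the formula associated to an index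
  have hfml : ∀ i : ι, Fml.imp (.imp i.1.1 i.1.2.1) i.1.2.2 ∈ Γ := fun i => i.2
  have hrv : ∀ (i : ι) n, (Fml.var n ∈ Γ) → (Mod i).val (pt i) n := by
    intro i n hn
    have hne : Fml.var n ≠ Fml.imp (.imp i.1.1 i.1.2.1) i.1.2.2 := by simp
    have : Fml.var n ∈ Γ.erase (Fml.imp (.imp i.1.1 i.1.2.1) i.1.2.2) :=
      (Multiset.mem_erase_of_ne hne).mpr hn
    exact hErase i _ this
  set N : KM := combKM Mod pt (fun n => Fml.var n ∈ Γ) hrv with hN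
  refine ⟨N, none, ?_, ?_⟩
  · -- root forces all of Γ
    intro φ hφ
    match φ with
    | .var r => exact hφ
    | .imp (.var p) ψ =>
      intro w' hw' hp
      cases hw' with
      | root => exact absurd hp (hP p ψ hφ)
      | up i u hu =>
        have hne : Fml.imp (.var p) ψ ≠ Fml.imp (.imp i.1.1 i.1.2.1) i.1.2.2 := by simp
        have hmem : Fml.imp (.var p) ψ ∈ Γ.erase _ := (Multiset.mem_erase_of_ne hne).mpr hφ
        have h1 : (Mod i).forces (.imp (.var p) ψ) (pt i) := hErase i _ hmem
        have h2 : (Mod i).forces (.imp (.var p) ψ) u := KM.forces_mono hu h1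
        have hp' : (Mod i).forces (.var p) u := (combKM_forces_some _ i u).mp hp
        exact (combKM_forces_some _ i u).mpr (KM.forces_mp h2 hp')
    | .imp (.imp a b) c =>
      intro w' hw' hab
      cases hw' with
      | root =>
        exfalso
        have : N.forces (.imp a b) (some ⟨(⟨(a, b, c), hφ⟩ : ι), pt (⟨(a, b, c), hφ⟩ : ι)⟩) :=
          KM.forces_mono (CLe.up (⟨(a, b, c), hφ⟩ : ι) (pt (⟨(a, b, c), hφ⟩ : ι)) ((Mod (⟨(a, b, c), hφ⟩ : ι)).refl _)) hab
        have hab' : (Mod (⟨(a, b, c), hφ⟩ : ι)).forces (.imp a b) (pt (⟨(a, b, c), hφ⟩ : ι)) := (combKM_forces_some _ (⟨(a, b, c), hφ⟩ : ι) _).mp this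
        have hAi : (Mod (⟨(a, b, c), hφ⟩ : ι)).forces a (pt (⟨(a, b, c), hφ⟩ : ι)) := hA (⟨(a, b, c), hφ⟩ : ι)
        have hBi : ¬ (Mod (⟨(a, b, c), hφ⟩ : ι)).forces b (pt (⟨(a, b, c), hφ⟩ : ι)) := hB (⟨(a, b, c), hφ⟩ : ι)
        exact hBi (KM.forces_mp hab' hAi)
      | up j u hu =>
        by_cases hmem : Fml.imp (.imp a b) c ∈ Γ.erase (Fml.imp (.imp j.1.1 j.1.2.1) j.1.2.2)
        · have h1 := hErase j _ hmem
          have h2 : (Mod j).forces (.imp (.imp a b) c) u := KM.forces_mono hu h1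
          have hab' : (Mod j).forces (.imp a b) u := (combKM_forces_some _ j u).mp hab
          exact (combKM_forces_some _ j u).mpr (KM.forces_mp h2 hab')
        · -- then this occurrence is the one erased: same formula
          have heq : Fml.imp (.imp a b) c = Fml.imp (.imp j.1.1 j.1.2.1) j.1.2.2 := by
            by_contra hne
            exact hmem ((Multiset.mem_erase_of_ne hne).mpr hφ)
          obtain ⟨⟨ha, hb⟩, hc⟩ : (a = j.1.1 ∧ b = j.1.2.1) ∧ c = j.1.2.2 := by
            simpa [Fml.imp.injEq] using heq
          have hAj : (Mod j).forces a u := by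
            rw [ha]; exact KM.forces_mono hu (hA j)
          have hBCj : (Mod j).forces (.imp b c) u := by
            rw [hb, hc]; exact KM.forces_mono hu (hBC j)
          have hab' : (Mod j).forces (.imp a b) u := (combKM_forces_some _ j u).mp hab
          have hbu : (Mod j).forces b u := KM.forces_mp hab' hAj
          exact (combKM_forces_some _ j u).mpr (KM.forces_mp hBCj hbu)
  · -- root does not force q
    exact fun h => hq h
/-! ### The decision procedure -/

theorem decideLM (N : ℕ) : ∀ (Γ : Multiset Fml) (δ : Fml), mu Γ δ ≤ N →
    Prov Γ δ ∨ Invalid Γ δ := by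
  induction N using Nat.strong_induction_on with
  | _ N IH =>
  intro Γ δ hN
  cases δ with
  | imp α β =>
    by_cases hm : ∃ γ, Fml.imp (.imp α β) γ ∈ Γ
    · -- rule (MI2→)
      obtain ⟨γ, hγ⟩ := hm
      have hcons : Fml.imp (.imp α β) γ ::ₘ Γ.erase (Fml.imp (.imp α β) γ) = Γ :=
        Multiset.cons_erase hγ
      have hsum : sumW Γ = (α.weight + β.weight + γ.weight + 2) +
          sumW (Γ.erase (Fml.imp (.imp α β) γ)) := by
        rw [← hcons, sumW_cons]; simp [Fml.weight]; ring
      have hmu : mu (α ::ₘ (Fml.imp β γ) ::ₘ Γ.erase (Fml.imp (.imp α β) γ)) β + 1 =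
          mu Γ (.imp α β) := by
        simp [mu, sumW_cons, dMeas_premise1, dMeas_of_match hγ, hsum, Fml.weight]; ring
      have hlt : mu (α ::ₘ (Fml.imp β γ) ::ₘ Γ.erase (Fml.imp (.imp α β) γ)) β < N := by omega
      rcases IH _ hlt _ _ le_rfl with ⟨t, hc, ha, hs, hh⟩ | ⟨M, w, hf, hnf⟩
      · left
        refine ⟨LMT.i2 (Γ.erase (Fml.imp (.imp α β) γ)) α β γ t,
          LMT.Correct.i2 hc (by rw [ha]) hs, by simp [LMT.ante, hcons], rfl, ?_⟩
        simp only [LMT.height]; omega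
      · right
        have hfα : M.forces α w := hf _ (by simp)
        have hfβγ : M.forces (.imp β γ) w := hf _ (by simp)
        refine ⟨M, w, ?_, fun h => hnf (KM.forces_mp h hfα)⟩
        intro φ hφ
        rw [← hcons] at hφ
        rcases Multiset.mem_cons.mp hφ with h | h
        · subst h; exact KM.forces_ll hfα hfβγ
        · exact hf φ (by simp [h])
    · -- rule (MI1→)
      push_neg at hm
      have hmu : mu (α ::ₘ Γ) β + 1 ≤ mu Γ (.imp α β) := by
        have h1 := dMeas_le_weight (α ::ₘ Γ) β
        have h2 := dMeas_of_not_match hm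
        simp [mu, sumW_cons, h2, Fml.weight]; omega
      have hlt : mu (α ::ₘ Γ) β < N := by omega
      rcases IH _ hlt _ _ le_rfl with ⟨t, hc, ha, hs, hh⟩ | ⟨M, w, hf, hnf⟩
      · left
        refine ⟨LMT.i1 Γ α β t, LMT.Correct.i1 hc (by rw [ha]) hs hm, rfl, rfl, ?_⟩
        simp only [LMT.height]; omega
      · right
        refine ⟨M, w, fun φ h => hf φ (by simp [h]),
          fun h => hnf (KM.forces_mp h (hf α (by simp)))⟩
  | var q =>
    by_cases hax : Fml.var q ∈ Γ
    · left
      refine ⟨LMT.ax (Γ.erase (Fml.var q)) q, LMT.Correct.ax _ _,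
        by simp [LMT.ante, Multiset.cons_erase hax], rfl, ?_⟩
      simp [LMT.height, mu]
    · by_cases hB2 : ∃ p γ, Fml.var p ∈ Γ ∧ Fml.imp (.var p) γ ∈ Γ
      · -- rule (ME→P) (or a one-world countermodel)
        obtain ⟨p, γ, hp, hpγ⟩ := hB2
        have h1 : Fml.imp (.var p) γ ∈ Γ.erase (Fml.var p) :=
          (Multiset.mem_erase_of_ne (by simp)).mpr hpγ
        have hcons : Fml.var p ::ₘ Fml.imp (.var p) γ ::ₘ
            ((Γ.erase (Fml.var p)).erase (Fml.imp (.var p) γ)) = Γ := by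
          rw [Multiset.cons_erase h1, Multiset.cons_erase hp]
        have hpq : p ≠ q := fun h => hax (h ▸ hp)
        by_cases hv : LMT.inVars q ((Γ.erase (Fml.var p)).erase (Fml.imp (.var p) γ)) γ
        · have hsum : sumW Γ = (γ.weight + 3) +
              sumW ((Γ.erase (Fml.var p)).erase (Fml.imp (.var p) γ)) := by
            rw [← hcons, sumW_cons, sumW_cons]; simp [Fml.weight]; ring
          have hmu : mu (Fml.var p ::ₘ γ ::ₘ
              ((Γ.erase (Fml.var p)).erase (Fml.imp (.var p) γ))) (.var q) + 2 =
              mu Γ (.var q) := by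
            simp [mu, sumW_cons, dMeas_var, hsum, Fml.weight]; ring
          have hlt : mu (Fml.var p ::ₘ γ ::ₘ
              ((Γ.erase (Fml.var p)).erase (Fml.imp (.var p) γ))) (.var q) < N := by omega
          rcases IH _ hlt _ _ le_rfl with ⟨t, hc, ha, hs, hh⟩ | ⟨M, w, hf, hnf⟩
          · left
            refine ⟨LMT.eP ((Γ.erase (Fml.var p)).erase (Fml.imp (.var p) γ)) p γ q t,
              LMT.Correct.eP hc (by rw [ha]) hs hv hpq, by simp [LMT.ante, hcons], rfl, ?_⟩
            simp only [LMT.height]; omega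
          · right
            have hfγ : M.forces γ w := hf _ (by simp)
            refine ⟨M, w, ?_, hnf⟩
            intro φ hφ
            rw [← hcons] at hφ
            rcases Multiset.mem_cons.mp hφ with h | h
            · subst h; exact hf _ (by simp)
            rcases Multiset.mem_cons.mp h with h | h
            · subst h; exact KM.forces_imp_of_forces _ hfγ
            · exact hf φ (by simp [h])
        · -- q occurs nowhere: one-world countermodel
          right
          have hv' : q ∉ γ.vars ∧ ∀ δ ∈ (Γ.erase (Fml.var p)).erase (Fml.imp (.var p) γ),
              q ∉ δ.vars := by
            unfold LMT.inVars at hv; push_neg at hv; exact hv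
          have hvars : ∀ φ ∈ Γ, q ∉ φ.vars := by
            intro φ hφ
            rw [← hcons] at hφ
            rcases Multiset.mem_cons.mp hφ with h | h
            · subst h; simp [Fml.vars]; exact fun h => hax (h ▸ hp)
            rcases Multiset.mem_cons.mp h with h | h
            · subst h; simp [Fml.vars]
              exact ⟨fun h => hax (h ▸ hp), fun h => (hv'.1 h).elim⟩
            · exact hv'.2 φ h
          exact ⟨oneW q, (), fun φ h => oneW_forces (hvars φ h), oneW_not_forces_q q⟩
      · -- rule (ME→→) / combined countermodel
        push_neg at hB2
        have KEY : ∀ a b c, Fml.imp (.imp a b) c ∈ Γ →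
            ((Prov (a ::ₘ (Fml.imp b c) ::ₘ Γ.erase (Fml.imp (.imp a b) c)) b ∧
              Prov (c ::ₘ Γ.erase (Fml.imp (.imp a b) c)) (.var q) ∧
              LMT.inVars q (Γ.erase (Fml.imp (.imp a b) c)) c) ∨
             Invalid Γ (.var q) ∨
             (∃ (M : KM) (w : M.W),
                (∀ φ ∈ Γ.erase (Fml.imp (.imp a b) c), M.forces φ w) ∧
                M.forces a w ∧ M.forces (.imp b c) w ∧ ¬ M.forces b w)) := by
          intro a b c hmem
          have hcons : Fml.imp (.imp a b) c ::ₘ Γ.erase (Fml.imp (.imp a b) c) = Γ :=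
            Multiset.cons_erase hmem
          have hsum : sumW Γ = (a.weight + b.weight + c.weight + 2) +
              sumW (Γ.erase (Fml.imp (.imp a b) c)) := by
            rw [← hcons, sumW_cons]; simp [Fml.weight]; ring
          by_cases hv : LMT.inVars q (Γ.erase (Fml.imp (.imp a b) c)) c
          · have hmu2 : mu (c ::ₘ Γ.erase (Fml.imp (.imp a b) c)) (.var q) +
                (a.weight + b.weight + 2) = mu Γ (.var q) := by
              simp [mu, sumW_cons, dMeas_var, hsum]; ring
            have hwa := a.weight_pos; have hwb := b.weight_pos
            have hlt2 : mu (c ::ₘ Γ.erase (Fml.imp (.imp a b) c)) (.var q) < N := by omega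
            rcases IH _ hlt2 _ _ le_rfl with h2 | ⟨M, w, hf2, hnf2⟩
            · have hmu1 : mu (a ::ₘ (Fml.imp b c) ::ₘ Γ.erase (Fml.imp (.imp a b) c)) b + 1 =
                  mu Γ (.var q) := by
                simp [mu, sumW_cons, dMeas_premise1, dMeas_var, hsum, Fml.weight]; ring
              have hlt1 : mu (a ::ₘ (Fml.imp b c) ::ₘ Γ.erase (Fml.imp (.imp a b) c)) b < N := by
                omega
              rcases IH _ hlt1 _ _ le_rfl with h1 | ⟨M, w, hf1, hnf1⟩
              · exact Or.inl ⟨h1, h2, hv⟩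
              · refine Or.inr (Or.inr ⟨M, w, fun φ h => hf1 φ (by simp [h]),
                  hf1 a (by simp), hf1 _ (by simp), hnf1⟩)
            · refine Or.inr (Or.inl ⟨M, w, ?_, hnf2⟩)
              intro φ hφ
              rw [← hcons] at hφ
              rcases Multiset.mem_cons.mp hφ with h | h
              · subst h; exact KM.forces_imp_of_forces _ (hf2 c (by simp))
              · exact hf2 φ (by simp [h])
          · refine Or.inr (Or.inl ⟨oneW q, (), ?_, oneW_not_forces_q q⟩)
            have hv' : q ∉ c.vars ∧ ∀ δ ∈ Γ.erase (Fml.imp (.imp a b) c), q ∉ δ.vars := by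
              unfold LMT.inVars at hv; push_neg at hv; exact hv
            intro φ hφ
            rw [← hcons] at hφ
            rcases Multiset.mem_cons.mp hφ with h | h
            · subst h
              intro w' _ _
              cases w'
              exact oneW_forces hv'.1
            · exact oneW_forces (hv'.2 φ h)
        by_cases hInv : Invalid Γ (.var q)
        · exact Or.inr hInv
        by_cases hE : ∃ a b c, Fml.imp (.imp a b) c ∈ Γ ∧
            Prov (a ::ₘ (Fml.imp b c) ::ₘ Γ.erase (Fml.imp (.imp a b) c)) b ∧
            Prov (c ::ₘ Γ.erase (Fml.imp (.imp a b) c)) (.var q) ∧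
            LMT.inVars q (Γ.erase (Fml.imp (.imp a b) c)) c
        · obtain ⟨a, b, c, hmem, ⟨t1, hc1, ha1, hs1, hh1⟩, ⟨t2, hc2, ha2, hs2, hh2⟩, hv⟩ := hE
          left
          have hcons : Fml.imp (.imp a b) c ::ₘ Γ.erase (Fml.imp (.imp a b) c) = Γ :=
            Multiset.cons_erase hmem
          have hsum : sumW Γ = (a.weight + b.weight + c.weight + 2) +
              sumW (Γ.erase (Fml.imp (.imp a b) c)) := by
            rw [← hcons, sumW_cons]; simp [Fml.weight]; ring
          have hmu2 : mu (c ::ₘ Γ.erase (Fml.imp (.imp a b) c)) (.var q) +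
              (a.weight + b.weight + 2) = mu Γ (.var q) := by
            simp [mu, sumW_cons, dMeas_var, hsum]; ring
          have hmu1 : mu (a ::ₘ (Fml.imp b c) ::ₘ Γ.erase (Fml.imp (.imp a b) c)) b + 1 =
              mu Γ (.var q) := by
            simp [mu, sumW_cons, dMeas_premise1, dMeas_var, hsum, Fml.weight]; ring
          have hwa := a.weight_pos; have hwb := b.weight_pos
          refine ⟨LMT.eE (Γ.erase (Fml.imp (.imp a b) c)) a b c q t1 t2,
            LMT.Correct.eE hc1 hc2 (by rw [ha1]) hs1 (by rw [ha2]) hs2 hv,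
            by simp [LMT.ante, hcons], rfl, ?_⟩
          simp only [LMT.height]; omega
        · right
          apply combine Γ q hax (fun p γ him hp => hB2 p γ hp him)
          intro a b c hmem
          rcases KEY a b c hmem with h | h | h
          · exact absurd ⟨a, b, c, hmem, h.1, h.2.1, h.2.2⟩ hE
          · exact absurd h hInv
          · exact h
/-! ### Closure: all formulas in a correct LM→ proof are generalized subformulas -/

def Good (ρ φ : Fml) : Prop :=
  Fml.Sub φ ρ ∨ ∃ a b, φ = Fml.imp a b ∧ Fml.Sub a ρ ∧ Fml.Sub b ρ

lemma good_left {ρ a b : Fml} (h : Good ρ (.imp a b)) : Good ρ a := by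
  rcases h with h | ⟨x, y, hxy, hx, hy⟩
  · exact Or.inl (Fml.sub_trans (Fml.Sub.impL (Fml.Sub.refl a)) h)
  · obtain ⟨hax, -⟩ : a = x ∧ b = y := by simpa [Fml.imp.injEq] using hxy
    subst hax; exact Or.inl hx

lemma good_right {ρ a b : Fml} (h : Good ρ (.imp a b)) : Good ρ b := by
  rcases h with h | ⟨x, y, hxy, hx, hy⟩
  · exact Or.inl (Fml.sub_trans (Fml.Sub.impR (Fml.Sub.refl b)) h)
  · obtain ⟨-, hby⟩ : a = x ∧ b = y := by simpa [Fml.imp.injEq] using hxy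
    subst hby; exact Or.inl hy

lemma good_ll {ρ a b c : Fml} (h : Good ρ (.imp (.imp a b) c)) : Good ρ (.imp b c) := by
  have hb : Fml.Sub b ρ := by
    rcases h with h' | ⟨x, y, hxy, hx, hy⟩
    · exact Fml.sub_trans (Fml.Sub.impL (Fml.Sub.impR (Fml.Sub.refl b))) h'
    · obtain ⟨h1, h2⟩ : Fml.imp a b = x ∧ c = y := by simpa [Fml.imp.injEq] using hxy
      subst h1
      exact Fml.sub_trans (Fml.Sub.impR (Fml.Sub.refl b)) hx
  have hcρ : Fml.Sub c ρ := by
    rcases h with h' | ⟨x, y, hxy, hx, hy⟩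
    · exact Fml.sub_trans (Fml.Sub.impR (Fml.Sub.refl c)) h'
    · obtain ⟨h1, h2⟩ : Fml.imp a b = x ∧ c = y := by simpa [Fml.imp.injEq] using hxy
      subst h2; exact hy
  exact Or.inr ⟨b, c, rfl, hb, hcρ⟩

theorem formulas_good {t : LMT} (hc : t.Correct) {ρ : Fml}
    (hante : ∀ φ ∈ t.ante, Good ρ φ) (hsucc : Good ρ t.succ) :
    ∀ φ ∈ t.formulas, Good ρ φ := by
  induction hc with
  | ax Γ p =>
    intro φ hφ
    simp only [LMT.formulas, Finset.mem_insert, Multiset.mem_toFinset] at hφ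
    rcases hφ with h | h
    · subst h; exact hsucc
    · exact hante φ h
  | @i1 Γ α β t hct ha hs hside ih =>
    have hα : Good ρ α := good_left hsucc
    have hβ : Good ρ β := good_right hsucc
    intro φ hφ
    simp only [LMT.formulas, Finset.mem_union, Finset.mem_insert,
      Multiset.mem_toFinset] at hφ
    rcases hφ with (h | h) | h
    · subst h; exact hsucc
    · exact hante φ h
    · refine ih ?_ (by rw [hs]; exact hβ) φ h
      rw [ha]; intro ψ hψ
      rcases Multiset.mem_cons.mp hψ with h' | h'
      · subst h'; exact hα
      · exact hante ψ (by simp [LMT.ante, h'])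
  | @i2 Γ α β γ t hct ha hs ih =>
    have hf : Good ρ (.imp (.imp α β) γ) := hante _ (by simp [LMT.ante])
    have hα : Good ρ α := good_left (good_left hf)
    have hβ : Good ρ β := good_right (good_left hf)
    have hβγ : Good ρ (.imp β γ) := good_ll hf
    intro φ hφ
    simp only [LMT.formulas, Finset.mem_union, Finset.mem_insert,
      Multiset.mem_toFinset] at hφ
    rcases hφ with (h | h) | h
    · subst h; exact hsucc
    · exact hante φ h
    · refine ih ?_ (by rw [hs]; exact hβ) φ h
      rw [ha]; intro ψ hψ
      rcases Multiset.mem_cons.mp hψ with h' | h'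
      · subst h'; exact hα
      rcases Multiset.mem_cons.mp h' with h'' | h''
      · subst h''; exact hβγ
      · exact hante ψ (by simp [LMT.ante, h''])
  | @eP Γ p γ q t hct ha hs hv hpq ih =>
    have hpγ : Good ρ (.imp (.var p) γ) := hante _ (by simp [LMT.ante])
    have hγ : Good ρ γ := good_right hpγ
    have hp : Good ρ (.var p) := good_left hpγ
    intro φ hφ
    simp only [LMT.formulas, Finset.mem_union, Finset.mem_insert,
      Multiset.mem_toFinset] at hφ
    rcases hφ with (h | h) | h
    · subst h; exact hsucc
    · exact hante φ h
    · refine ih ?_ (by rw [hs]; exact hsucc) φ h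
      rw [ha]; intro ψ hψ
      rcases Multiset.mem_cons.mp hψ with h' | h'
      · subst h'; exact hp
      rcases Multiset.mem_cons.mp h' with h'' | h''
      · subst h''; exact hγ
      · exact hante ψ (by simp [LMT.ante, h''])
  | @eE Γ α β γ q t₁ t₂ hc1 hc2 ha1 hs1 ha2 hs2 hv ih1 ih2 =>
    have hf : Good ρ (.imp (.imp α β) γ) := hante _ (by simp [LMT.ante])
    have hα : Good ρ α := good_left (good_left hf)
    have hβ : Good ρ β := good_right (good_left hf)
    have hγ : Good ρ γ := good_right hf
    have hβγ : Good ρ (.imp β γ) := good_ll hf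
    intro φ hφ
    simp only [LMT.formulas, Finset.mem_union, Finset.mem_insert,
      Multiset.mem_toFinset] at hφ
    rcases hφ with ((h | h) | h) | h
    · subst h; exact hsucc
    · exact hante φ h
    · refine ih1 ?_ (by rw [hs1]; exact hβ) φ h
      rw [ha1]; intro ψ hψ
      rcases Multiset.mem_cons.mp hψ with h' | h'
      · subst h'; exact hα
      rcases Multiset.mem_cons.mp h' with h'' | h''
      · subst h''; exact hβγ
      · exact hante ψ (by simp [LMT.ante, h''])
    · refine ih2 ?_ (by rw [hs2]; exact hsucc) φ h
      rw [ha2]; intro ψ hψ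
      rcases Multiset.mem_cons.mp hψ with h' | h'
      · subst h'; exact hγ
      · exact hante ψ (by simp [LMT.ante, h'])

/-! ### Final assembly -/

/-- There is a polynomial `p` such that every purely implicational formula `ρ` valid
in minimal logic has a tree-like LM→ proof of the sequent `⇒ ρ` whose height plus
the total weight of the set of distinct formulas occurring in it is at most
`p(|ρ|)` (a quasi-polynomial tree-like LM→ proof). -/
theorem LM_quasiPolynomial_proofs :
    ∃ p : Polynomial ℕ, ∀ ρ : Fml, MinValid ρ →
      ∃ t : LMT, t.Correct ∧ t.ante = 0 ∧ t.succ = ρ ∧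
        t.height + t.phi ≤ p.eval ρ.weight := by 
  refine ⟨Polynomial.C 3 * (Polynomial.X + Polynomial.C 1) ^ 3, ?_⟩
  intro ρ hρ
  have hval : ∀ (M : KM) (w : M.W), M.forces ρ w := minValid_valid hρ
  rcases decideLM (mu 0 ρ) 0 ρ le_rfl with ⟨t, hc, ha, hs, hh⟩ | ⟨M, w, _, hnf⟩
  · refine ⟨t, hc, ha, hs, ?_⟩
    set n := ρ.weight with hn
    have hwρ := ρ.weight_pos
    -- height bound
    have hmu0 : mu 0 ρ = n := by
      have h1 : dMeas 0 ρ = ρ.weight := dMeas_of_not_match (by intro γ h; simp at h)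
      simp [mu, sumW, h1, hn]
    have hheight : t.height ≤ n := by rw [← hmu0]; exact hh
    -- phi bound
    have hgood : ∀ φ ∈ t.formulas, Good ρ φ := by
      refine formulas_good hc ?_ ?_
      · rw [ha]; intro φ h; simp at h
      · rw [hs]; exact Or.inl (Fml.Sub.refl ρ)
    set D : Finset Fml := Fml.subF ρ ∪ Finset.image₂ Fml.imp (Fml.subF ρ) (Fml.subF ρ)
      with hD
    have hsubset : t.formulas ⊆ D := by
      intro φ hφ
      rcases hgood φ hφ with h | ⟨a, b, hab, hA, hB⟩
      · exact Finset.mem_union_left _ (Fml.mem_subF_of_sub h)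
      · refine Finset.mem_union_right _ ?_
        rw [Finset.mem_image₂]
        exact ⟨a, Fml.mem_subF_of_sub hA, b, Fml.mem_subF_of_sub hB, hab.symm⟩
    have hwD : ∀ φ ∈ D, φ.weight ≤ 2 * n + 1 := by
      intro φ hφ
      rcases Finset.mem_union.mp hφ with h | h
      · have := Fml.weight_le_of_mem_subF h; omega
      · rw [Finset.mem_image₂] at h
        obtain ⟨a, haS, b, hbS, hab⟩ := h
        have h1 := Fml.weight_le_of_mem_subF haS
        have h2 := Fml.weight_le_of_mem_subF hbS
        subst hab; simp [Fml.weight]; omega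
    have hcardD : D.card ≤ n + n * n := by
      calc D.card ≤ (Fml.subF ρ).card + (Finset.image₂ Fml.imp (Fml.subF ρ) (Fml.subF ρ)).card :=
            Finset.card_union_le _ _
      _ ≤ (Fml.subF ρ).card + (Fml.subF ρ).card * (Fml.subF ρ).card := by
            have := Finset.card_image₂_le Fml.imp (Fml.subF ρ) (Fml.subF ρ); omega
      _ ≤ n + n * n := by
            have := Fml.card_subF_le ρ
            have : (Fml.subF ρ).card ≤ n := this
            nlinarith
    have hphi : t.phi ≤ (n + n * n) * (2 * n + 1) := by
      calc t.phi ≤ D.sum Fml.weight := Finset.sum_le_sum_of_subset hsubset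
      _ ≤ D.card • (2 * n + 1) := Finset.sum_le_card_nsmul _ _ _ hwD
      _ = D.card * (2 * n + 1) := by simp [smul_eq_mul]
      _ ≤ (n + n * n) * (2 * n + 1) := Nat.mul_le_mul_right _ hcardD
    have heval : (Polynomial.C 3 * (Polynomial.X + Polynomial.C 1) ^ 3).eval n =
        3 * (n + 1) ^ 3 := by simp
    rw [heval]
    nlinarith [hheight, hphi]
  · exact absurd (hval M w) hnf
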